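/- Product integral formula: for r, n ≥ 1, ∫_0^1 B_r^{[m-1]}(t) B_n^{[m-1]}(t) dt = ((-1)^{r+1} r! n! m!/(r+n)!)[(B_{r+n+1}^{[m-1]} - B_{r+n+1}^{[m-1]}(1))/(r+n+1) + (1/m!) ∑_{k=1}^r A_k^{[m-1]}], where A_k^{[m-1]} = ((-1)^k/k)·C(r+n, k-1)·(B_{r+n-k+1}^{[m-1]} B_k^{[m-1]} - B_{r+n-k+1}^{[m-1]}(1) B_k^{[m-1]}(1)). -/

import Mathlib

open scoped Nat Real

/-- The partial sum `∑_{l=0}^{m-1} z^l / l!` of the exponential series. -/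
noncomputable def expPartialSum (m : ℕ) : PowerSeries ℝ :=
  ∑ l ∈ Finset.range m, PowerSeries.C ((1 : ℝ) / l !) * PowerSeries.X ^ l

/-- `B : ℕ → ℝ → ℝ` is the family of generalized Bernoulli polynomials of level `m`,
i.e. `z^m e^{xz} / (e^z - ∑_{l=0}^{m-1} z^l/l!) = ∑ B n x * z^n / n!`, stated
multiplicatively. -/
noncomputable def IsGenBernoulli (m : ℕ) (B : ℕ → ℝ → ℝ) : Prop :=
  ∀ x : ℝ,
    (PowerSeries.exp ℝ - expPartialSum m) * PowerSeries.mk (fun n => B n x / n !) =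
      PowerSeries.X ^ m * PowerSeries.mk (fun n => x ^ n / n !)

lemma fne (m : ℕ) : (PowerSeries.exp ℝ - expPartialSum m) ≠ 0 := by
  intro h
  have h1 : PowerSeries.coeff m (PowerSeries.exp ℝ - expPartialSum m) = 1 / m ! := by
    rw [map_sub, PowerSeries.coeff_exp]
    have : PowerSeries.coeff m (expPartialSum m) = 0 := by
      rw [expPartialSum, map_sum]
      apply Finset.sum_eq_zero
      intro l hl
      rw [PowerSeries.coeff_C_mul, PowerSeries.coeff_X_pow]
      simp [Nat.ne_of_gt (Finset.mem_range.mp hl)]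
    rw [this]
    simp
  rw [h] at h1
  simp at h1
  exact (Nat.factorial_ne_zero m) (by exact_mod_cast h1.symm)

lemma mkE_zero : PowerSeries.mk (fun n => (0:ℝ) ^ n / n !) = 1 := by
  ext k
  rw [PowerSeries.coeff_mk, PowerSeries.coeff_one]
  cases k <;> simp

lemma key_mul (m : ℕ) (B : ℕ → ℝ → ℝ) (hB : IsGenBernoulli m B) (x : ℝ) :
    PowerSeries.mk (fun n => B n x / n !) =
      PowerSeries.mk (fun n => B n 0 / n !) * PowerSeries.mk (fun n => x ^ n / n !) := by
  apply mul_left_cancel₀ (fne m)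
  rw [hB x, ← mul_assoc, hB 0, mkE_zero, mul_one]

lemma coeff_partial (m i : ℕ) :
    PowerSeries.coeff i (expPartialSum m) = if i < m then (1 : ℝ) / (i ! : ℝ) else 0 := by
  rw [expPartialSum, map_sum]
  simp only [PowerSeries.coeff_C_mul, PowerSeries.coeff_X_pow, mul_ite, mul_one, mul_zero]
  simp [Finset.sum_ite_eq, Finset.mem_range]

lemma coeff_f (m i : ℕ) :
    PowerSeries.coeff i (PowerSeries.exp ℝ - expPartialSum m) =
      if i < m then 0 else (1 : ℝ) / (i ! : ℝ) := by
  rw [map_sub, PowerSeries.coeff_exp, coeff_partial]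
  split <;> simp

lemma B0_eq (m : ℕ) (B : ℕ → ℝ → ℝ) (hB : IsGenBernoulli m B) : B 0 0 = m ! := by
  have h := hB 0
  rw [mkE_zero, mul_one] at h
  have h2 := congrArg (PowerSeries.coeff m) h
  rw [PowerSeries.coeff_mul] at h2
  rw [Finset.Nat.sum_antidiagonal_eq_sum_range_succ_mk] at h2
  rw [Finset.sum_eq_single m] at h2
  · simp only [coeff_f, lt_irrefl, if_false, Nat.sub_self, PowerSeries.coeff_mk] at h2
    simp only [PowerSeries.coeff_X_pow, lt_irrefl, if_pos rfl] at h2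
    simp at h2
    field_simp at h2
    linarith
  · intro b hb hbm
    rw [coeff_f]
    have : b < m := lt_of_le_of_ne (Nat.lt_succ_iff.mp (Finset.mem_range.mp hb)) hbm
    simp [this]
  · intro h; simp at h

lemma hBsum (m : ℕ) (B : ℕ → ℝ → ℝ) (hB : IsGenBernoulli m B) (n : ℕ) (x : ℝ) :
    B n x = ∑ j ∈ Finset.range (n + 1), (n.choose j : ℝ) * B (n - j) 0 * x ^ j := by
  have h := congrArg (PowerSeries.coeff n) (key_mul m B hB x)
  rw [PowerSeries.coeff_mk, PowerSeries.coeff_mul,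
    Finset.Nat.sum_antidiagonal_eq_sum_range_succ_mk] at h
  simp only [PowerSeries.coeff_mk] at h
  rw [← Finset.sum_range_reflect]
  have hn : (n ! : ℝ) ≠ 0 := Nat.cast_ne_zero.mpr n.factorial_ne_zero
  have h2 : B n x = ∑ k ∈ Finset.range (n + 1),
      (n ! : ℝ) * (B k 0 / k ! * (x ^ (n - k) / (n - k)!)) := by
    rw [← Finset.mul_sum, ← h]; field_simp
  rw [h2]
  apply Finset.sum_congr rfl
  intro k hk
  have hk' : k ≤ n := Nat.lt_succ_iff.mp (Finset.mem_range.mp hk)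
  have e : n + 1 - 1 - k = n - k := by omega
  rw [e, Nat.choose_symm hk', Nat.sub_sub_self hk', Nat.cast_choose ℝ hk']
  have h1 : (k ! : ℝ) ≠ 0 := Nat.cast_ne_zero.mpr k.factorial_ne_zero
  have h2 : ((n - k)! : ℝ) ≠ 0 := Nat.cast_ne_zero.mpr (n - k).factorial_ne_zero
  field_simp

lemma B0_const (m : ℕ) (B : ℕ → ℝ → ℝ) (hB : IsGenBernoulli m B) (x : ℝ) :
    B 0 x = m ! := by
  have := hBsum m B hB 0 x
  simpa using this.trans (by simp [B0_eq m B hB])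

lemma hasDerivB (m : ℕ) (B : ℕ → ℝ → ℝ) (hB : IsGenBernoulli m B) (n : ℕ) (x : ℝ) :
    HasDerivAt (fun t => B (n + 1) t) (((n : ℝ) + 1) * B n x) x := by
  have hfun : (fun t => B (n + 1) t) = fun t : ℝ =>
      ∑ j ∈ Finset.range (n + 2), ((n + 1).choose j : ℝ) * B (n + 1 - j) 0 * t ^ j := by
    funext t; exact hBsum m B hB (n + 1) t
  rw [hfun]
  have hd : HasDerivAt (fun t : ℝ =>
      ∑ j ∈ Finset.range (n + 2), ((n + 1).choose j : ℝ) * B (n + 1 - j) 0 * t ^ j)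
      (∑ j ∈ Finset.range (n + 2),
        ((n + 1).choose j : ℝ) * B (n + 1 - j) 0 * ((j : ℝ) * x ^ (j - 1))) x := by
    refine HasDerivAt.fun_sum fun j _ => ?_
    have := (hasDerivAt_pow j x).const_mul (((n + 1).choose j : ℝ) * B (n + 1 - j) 0)
    simpa [mul_assoc] using this
  convert hd using 1
  rw [Finset.sum_range_succ']
  simp only [Nat.cast_zero, zero_mul, mul_zero, add_zero, pow_zero]
  rw [hBsum m B hB n x, Finset.mul_sum]
  apply Finset.sum_congr rfl
  intro i _
  have e : n + 1 - (i + 1) = n - i := by omega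
  have hc : ((n + 1).choose (i + 1) : ℝ) * (i + 1) = (n + 1) * (n.choose i : ℝ) := by
    have := Nat.add_one_mul_choose_eq n i
    have := congrArg (fun z : ℕ => (z : ℝ)) this
    push_cast at this
    linarith
  rw [e]
  simp only [Nat.add_sub_cancel, Nat.cast_add, Nat.cast_one]
  calc (↑n + 1) * (↑(n.choose i) * B (n - i) 0 * x ^ i)
      = ((↑n + 1) * ↑(n.choose i)) * (B (n - i) 0 * x ^ i) := by ring
    _ = (↑((n + 1).choose (i + 1)) * (↑i + 1)) * (B (n - i) 0 * x ^ i) := by rw [hc]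
    _ = ↑((n + 1).choose (i + 1)) * B (n - i) 0 * ((↑i + 1) * x ^ i) := by ring

lemma contB (m : ℕ) (B : ℕ → ℝ → ℝ) (hB : IsGenBernoulli m B) (n : ℕ) :
    Continuous (fun t => B n t) := by
  have hfun : (fun t => B n t) = fun t : ℝ =>
      ∑ j ∈ Finset.range (n + 1), (n.choose j : ℝ) * B (n - j) 0 * t ^ j := by
    funext t; exact hBsum m B hB n t
  rw [hfun]
  exact continuous_finset_sum _ fun j _ => Continuous.mul continuous_const (continuous_pow j)

lemma hasDerivG (m : ℕ) (B : ℕ → ℝ → ℝ) (hB : IsGenBernoulli m B) (s : ℕ) (x : ℝ) :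
    HasDerivAt (fun t => B (s + 1) t / ((s : ℝ) + 1)) (B s x) x := by
  have h := (hasDerivB m B hB s x).div_const ((s : ℝ) + 1)
  have hs : ((s : ℝ) + 1) ≠ 0 := by positivity
  simpa [mul_div_assoc, mul_div_cancel_left₀ _ hs] using h

lemma intB (m : ℕ) (B : ℕ → ℝ → ℝ) (hB : IsGenBernoulli m B) (s : ℕ) :
    ∫ t in (0 : ℝ)..1, B s t = (B (s + 1) 1 - B (s + 1) 0) / ((s : ℝ) + 1) := by
  rw [intervalIntegral.integral_eq_sub_of_hasDerivAt
    (fun x _ => hasDerivG m B hB s x) ((contB m B hB s).intervalIntegrable 0 1)]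
  ring

lemma ibp (m : ℕ) (B : ℕ → ℝ → ℝ) (hB : IsGenBernoulli m B) (k s : ℕ) :
    ∫ t in (0 : ℝ)..1, B (k + 1) t * B s t =
      (B (k + 1) 1 * B (s + 1) 1 - B (k + 1) 0 * B (s + 1) 0) / ((s : ℝ) + 1) -
        (((k : ℝ) + 1) / ((s : ℝ) + 1)) * ∫ t in (0 : ℝ)..1, B k t * B (s + 1) t := by
  have h := intervalIntegral.integral_mul_deriv_eq_deriv_mul
    (u := fun t => B (k + 1) t) (u' := fun x => ((k : ℝ) + 1) * B k x)
    (v := fun t => B (s + 1) t / ((s : ℝ) + 1)) (v' := fun t => B s t)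
    (fun x _ => hasDerivB m B hB k x) (fun x _ => hasDerivG m B hB s x)
    ((continuous_const.mul (contB m B hB k)).intervalIntegrable 0 1)
    ((contB m B hB s).intervalIntegrable 0 1)
  rw [h]
  have e : (fun x => (((k : ℝ) + 1) * B k x) * (B (s + 1) x / ((s : ℝ) + 1))) =
      fun x => (((k : ℝ) + 1) / ((s : ℝ) + 1)) * (B k x * B (s + 1) x) :=
    funext fun x => by ring
  rw [e, intervalIntegral.integral_const_mul]
  ring

lemma main_ind (m : ℕ) (B : ℕ → ℝ → ℝ) (hB : IsGenBernoulli m B) (r n : ℕ)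
    (hr : 1 ≤ r) (hn : 1 ≤ n) :
    ∀ k, k ≤ r →
      (∫ t in (0 : ℝ)..1, B k t * B (r + n - k) t) =
        (-1 : ℝ) ^ k * ((k ! : ℝ) * ((r + n - k)! : ℝ) / ((r + n)! : ℝ)) *
            (∫ t in (0 : ℝ)..1, B 0 t * B (r + n) t) +
          ∑ i ∈ Finset.Icc 1 k,
            (-1 : ℝ) ^ (k - i) * ((k ! : ℝ) / (i ! : ℝ)) *
              (((r + n - k)! : ℝ) / ((r + n - i)! : ℝ)) *
              ((B i 1 * B (r + n - i + 1) 1 - B i 0 * B (r + n - i + 1) 0) /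
                (((r + n - i : ℕ) : ℝ) + 1)) := by
  intro k
  induction k with
  | zero =>
    intro _
    simp [div_self (Nat.cast_ne_zero.mpr (r + n).factorial_ne_zero : ((r + n)! : ℝ) ≠ 0)]
  | succ k IH =>
    intro hk1
    have hIH := IH (by omega)
    have hs : r + n - (k + 1) + 1 = r + n - k := by omega
    have h1 := ibp m B hB k (r + n - (k + 1))
    rw [hs] at h1
    rw [h1, hIH]
    rw [Finset.sum_Icc_succ_top (by omega : 1 ≤ k + 1)]
    -- notation
    set J0 := ∫ t in (0 : ℝ)..1, B 0 t * B (r + n) t with hJ0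
    have hfac1 : ((k + 1)! : ℝ) = ((k : ℝ) + 1) * (k ! : ℝ) := by
      rw [Nat.factorial_succ]; push_cast; ring
    have hfac2 : ((r + n - k)! : ℝ) =
        (((r + n - (k + 1) : ℕ) : ℝ) + 1) * ((r + n - (k + 1))! : ℝ) := by
      rw [← hs, Nat.factorial_succ]; push_cast; ring
    have hne1 : (((r + n - (k + 1) : ℕ) : ℝ) + 1) ≠ 0 := by positivity
    have hne2 : ((r + n)! : ℝ) ≠ 0 := Nat.cast_ne_zero.mpr (r + n).factorial_ne_zero
    have hDterm : (-1 : ℝ) ^ (k + 1 - (k + 1)) * (((k + 1)! : ℝ) / ((k + 1)! : ℝ)) *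
        (((r + n - (k + 1))! : ℝ) / ((r + n - (k + 1))! : ℝ)) *
        ((B (k + 1) 1 * B (r + n - (k + 1) + 1) 1 - B (k + 1) 0 * B (r + n - (k + 1) + 1) 0) /
          (((r + n - (k + 1) : ℕ) : ℝ) + 1)) =
        (B (k + 1) 1 * B (r + n - k) 1 - B (k + 1) 0 * B (r + n - k) 0) /
          (((r + n - (k + 1) : ℕ) : ℝ) + 1) := by
      rw [hs]
      simp [div_self (Nat.cast_ne_zero.mpr (k + 1).factorial_ne_zero : ((k + 1)! : ℝ) ≠ 0),
        div_self (Nat.cast_ne_zero.mpr (r + n - (k + 1)).factorial_ne_zero :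
          ((r + n - (k + 1))! : ℝ) ≠ 0)]
    rw [hDterm]
    -- coefficient for J0
    have eA : (-1 : ℝ) ^ (k + 1) * (((k + 1)! : ℝ) * ((r + n - (k + 1))! : ℝ) / ((r + n)! : ℝ)) =
        -((((k : ℝ) + 1) / (((r + n - (k + 1) : ℕ) : ℝ) + 1)) *
          ((-1 : ℝ) ^ k * ((k ! : ℝ) * ((r + n - k)! : ℝ) / ((r + n)! : ℝ)))) := by
      rw [pow_succ, hfac1, hfac2]
      field_simp
    -- sum terms
    have eS : ∀ i ∈ Finset.Icc 1 k,
        (-1 : ℝ) ^ (k + 1 - i) * (((k + 1)! : ℝ) / (i ! : ℝ)) *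
          (((r + n - (k + 1))! : ℝ) / ((r + n - i)! : ℝ)) *
          ((B i 1 * B (r + n - i + 1) 1 - B i 0 * B (r + n - i + 1) 0) /
            (((r + n - i : ℕ) : ℝ) + 1)) =
        -((((k : ℝ) + 1) / (((r + n - (k + 1) : ℕ) : ℝ) + 1)) *
          ((-1 : ℝ) ^ (k - i) * ((k ! : ℝ) / (i ! : ℝ)) *
            (((r + n - k)! : ℝ) / ((r + n - i)! : ℝ)) *
            ((B i 1 * B (r + n - i + 1) 1 - B i 0 * B (r + n - i + 1) 0) /
              (((r + n - i : ℕ) : ℝ) + 1)))) := by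
      intro i hi
      have hi' : i ≤ k := (Finset.mem_Icc.mp hi).2
      have hpow : (k + 1 - i) = (k - i) + 1 := by omega
      rw [hpow, pow_succ, hfac1, hfac2]
      have hne3 : ((i)! : ℝ) ≠ 0 := Nat.cast_ne_zero.mpr i.factorial_ne_zero
      have hne4 : ((r + n - i)! : ℝ) ≠ 0 := Nat.cast_ne_zero.mpr (r + n - i).factorial_ne_zero
      have hne5 : (((r + n - i : ℕ) : ℝ) + 1) ≠ 0 := by positivity
      field_simp
    rw [Finset.sum_congr rfl eS]
    rw [eA]
    rw [Finset.sum_neg_distrib, ← Finset.mul_sum]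
    ring

lemma J0val (m : ℕ) (B : ℕ → ℝ → ℝ) (hB : IsGenBernoulli m B) (N : ℕ) :
    ∫ t in (0 : ℝ)..1, B 0 t * B N t =
      (m ! : ℝ) * ((B (N + 1) 1 - B (N + 1) 0) / ((N : ℝ) + 1)) := by
  rw [intervalIntegral.integral_congr
    (g := fun t => (m ! : ℝ) * B N t) (fun t _ => by rw [B0_const m B hB t])]
  rw [intervalIntegral.integral_const_mul, intB m B hB N]

theorem stmt_16 (m : ℕ) (hm : 0 < m) (B : ℕ → ℝ → ℝ) (hB : IsGenBernoulli m B)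
    (r n : ℕ) (hr : 1 ≤ r) (hn : 1 ≤ n) :
    ∫ t in (0 : ℝ)..1, B r t * B n t =
      ((-1 : ℝ) ^ (r + 1) * (r ! : ℝ) * (n ! : ℝ) * (m ! : ℝ) / ((r + n)! : ℝ)) *
        ((B (r + n + 1) 0 - B (r + n + 1) 1) / ((r + n + 1 : ℕ) : ℝ) +
          (1 / (m ! : ℝ)) *
            ∑ k ∈ Finset.Icc 1 r,
              ((-1 : ℝ) ^ k / (k : ℝ)) * ((r + n).choose (k - 1) : ℝ) *
                (B (r + n - k + 1) 0 * B k 0 - B (r + n - k + 1) 1 * B k 1)) := by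
  have hmain := main_ind m B hB r n hr hn r le_rfl
  have hrn : r + n - r = n := by omega
  rw [hrn] at hmain
  rw [hmain, J0val m B hB (r + n)]
  rw [mul_add, Finset.mul_sum, Finset.mul_sum]
  have hne2 : ((r + n)! : ℝ) ≠ 0 := Nat.cast_ne_zero.mpr (r + n).factorial_ne_zero
  have hnem : ((m)! : ℝ) ≠ 0 := Nat.cast_ne_zero.mpr m.factorial_ne_zero
  have hner : ((r)! : ℝ) ≠ 0 := Nat.cast_ne_zero.mpr r.factorial_ne_zero
  have hnen : ((n)! : ℝ) ≠ 0 := Nat.cast_ne_zero.mpr n.factorial_ne_zero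
  congr 1
  · -- J0 part
    have hc : ((r + n + 1 : ℕ) : ℝ) = ((r + n : ℕ) : ℝ) + 1 := by push_cast; ring
    rw [hc, pow_succ]
    field_simp
    ring
  · -- sums
    apply Finset.sum_congr rfl
    intro k hk
    obtain ⟨hk1, hkr⟩ := Finset.mem_Icc.mp hk
    have hsgn : (-1 : ℝ) ^ (r - k) = (-1 : ℝ) ^ r * (-1 : ℝ) ^ k := by
      have h2 : r - k + 2 * k = r + k := by omega
      calc (-1 : ℝ) ^ (r - k) = (-1 : ℝ) ^ (r - k) * ((-1 : ℝ) ^ 2) ^ k := by norm_num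
        _ = (-1 : ℝ) ^ (r - k + 2 * k) := by rw [pow_add, pow_mul]
        _ = (-1 : ℝ) ^ (r + k) := by rw [h2]
        _ = (-1 : ℝ) ^ r * (-1 : ℝ) ^ k := pow_add _ _ _
    have hchoose : (((r + n).choose (k - 1)) : ℝ) =
        ((r + n)! : ℝ) / (((k - 1)! : ℝ) * ((r + n - k + 1)! : ℝ)) := by
      rw [Nat.cast_choose ℝ (by omega : k - 1 ≤ r + n),
        show r + n - (k - 1) = r + n - k + 1 by omega]
    have hfk : (k ! : ℝ) = (k : ℝ) * ((k - 1)! : ℝ) := by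
      conv_lhs => rw [show k = (k - 1) + 1 by omega]
      rw [Nat.factorial_succ, show k - 1 + 1 = k by omega]
      push_cast
      ring
    have hfrnk : ((r + n - k + 1)! : ℝ) = (((r + n - k : ℕ) : ℝ) + 1) * ((r + n - k)! : ℝ) := by
      rw [Nat.factorial_succ]; push_cast; ring
    have hnek : (k : ℝ) ≠ 0 := by positivity
    have hnek1 : ((k - 1)! : ℝ) ≠ 0 := Nat.cast_ne_zero.mpr (k - 1).factorial_ne_zero
    have hnenk : ((r + n - k)! : ℝ) ≠ 0 := Nat.cast_ne_zero.mpr (r + n - k).factorial_ne_zero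
    have hnenk1 : (((r + n - k : ℕ) : ℝ) + 1) ≠ 0 := by positivity
    rw [hsgn, hchoose, pow_succ, hfk, hfrnk]
    field_simp
    ring
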